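/- Let M be a loopless matroid on a linearly ordered finite ground set E. Let S = {i₁ > … > i_p} be an NBC-set of M and set F_k = cl({i₁, …, i_k}) for 0 ≤ k ≤ p. For an NBC-set S' = {i'₁, …, i'_p} of M of size p, let A be the p × p integer matrix with A(j,k) = 1 if i'_j ∈ F_k ∖ F_{k−1} and A(j,k) = 0 otherwise. Then: (a) if S' = S and the elements are listed in decreasing order (i'_j = i_j for all j), then A is the identity matrix, so det A = 1; (b) if S' ≠ S, then det A = 0. -/

import Mathlib

open Finset Set
open scoped Classical

/-- A circuit of a matroid: a minimal dependent set, i.e. a dependent set all of whose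
one-element deletions are independent. -/
def MatroidCircuit {α : Type*} (M : Matroid α) (C : Set α) : Prop :=
  M.Dep C ∧ ∀ x ∈ C, M.Indep (C \ {x})

/-- A broken circuit: a circuit with its minimum element removed
(with respect to a linear order on the ground type). -/
def BrokenCircuit {α : Type*} [LinearOrder α] (M : Matroid α) (B : Set α) : Prop :=
  ∃ (C : Set α) (m : α), MatroidCircuit M C ∧ m ∈ C ∧ (∀ x ∈ C, m ≤ x) ∧ B = C \ {m}

/-- An NBC-set: a subset of the ground set containing no broken circuit. -/
def IsNBC {α : Type*} [LinearOrder α] (M : Matroid α) (S : Set α) : Prop :=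
  S ⊆ M.E ∧ ∀ B : Set α, BrokenCircuit M B → ¬B ⊆ S

/-- Every dependent set in a finite matroid contains a circuit. -/
lemma exists_circuit_of_dep_aux {α : Type*} [Fintype α] {M : Matroid α} :
    ∀ n (D : Set α), D.ncard = n → M.Dep D → ∃ C ⊆ D, MatroidCircuit M C := by
  intro n
  induction n using Nat.strong_induction_on with
  | _ n IH =>
    intro D hcard hD
    by_cases h : ∀ x ∈ D, M.Indep (D \ {x})
    · exact ⟨D, subset_rfl, hD, h⟩
    · push_neg at h
      obtain ⟨x, hxD, hx⟩ := h
      have hD' : M.Dep (D \ {x}) :=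
        (M.dep_iff).mpr ⟨hx, diff_subset.trans hD.subset_ground⟩
      obtain ⟨C, hCsub, hC⟩ := IH ((D \ {x}).ncard)
        (by subst hcard; exact Set.ncard_diff_singleton_lt_of_mem hxD (Set.toFinite D))
        _ rfl hD'
      exact ⟨C, hCsub.trans diff_subset, hC⟩

lemma exists_circuit_of_dep {α : Type*} [Fintype α] {M : Matroid α} {D : Set α}
    (hD : M.Dep D) : ∃ C ⊆ D, MatroidCircuit M C :=
  exists_circuit_of_dep_aux _ D rfl hD

/-- Each element of a circuit is in the closure of the rest. -/
lemma MatroidCircuit.mem_closure_diff {α : Type*} {M : Matroid α} {C : Set α}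
    (hC : MatroidCircuit M C) {x : α} (hx : x ∈ C) : x ∈ M.closure (C \ {x}) := by
  have hI := hC.2 x hx
  by_contra h
  have hind : M.Indep (insert x (C \ {x})) := by
    rw [hI.insert_indep_iff_of_notMem (by simp)]
    exact ⟨hC.1.subset_ground hx, h⟩
  rw [Set.insert_diff_singleton, Set.insert_eq_of_mem hx] at hind
  exact hC.1.not_indep hind

/-- An NBC-set is independent. -/
lemma IsNBC.indep {α : Type*} [Fintype α] [LinearOrder α] {M : Matroid α} {S : Set α}
    (hS : IsNBC M S) : M.Indep S := by
  by_contra h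
  obtain ⟨C, hCS, hC⟩ := exists_circuit_of_dep ((M.dep_iff).mpr ⟨h, hS.1⟩)
  have hne : C.Nonempty := by
    rcases C.eq_empty_or_nonempty with rfl | hne
    · exact (hC.1.not_indep M.empty_indep).elim
    · exact hne
  obtain ⟨m, hmC, hmin⟩ := Set.exists_min_image C id (Set.toFinite C) hne
  exact hS.2 (C \ {m}) ⟨C, m, hC, hmC, hmin, rfl⟩ (diff_subset.trans hCS)

/-- Let `S = {i₁ > … > i_p}` be an NBC-set of a loopless matroid `M`, let
`F_k = cl{i₁, …, i_k}`, and let `S' = {i'₁, …, i'_p}` be an NBC-set of size `p`.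
Let `A` be the `p × p` integer matrix with `A(j,k) = 1` if `i'_j ∈ F_k ∖ F_{k−1}`
and `A(j,k) = 0` otherwise.  (a) If `i'_j = i_j` for all `j` then `A` is the
identity matrix, so `det A = 1`.  (b) If `S' ≠ S` then `det A = 0`. -/
theorem nbc_incidence_matrix_det
    {α : Type*} [Fintype α] [LinearOrder α] (M : Matroid α)
    (hloopless : M.closure ∅ = ∅)
    (p : ℕ) (i : Fin p → α) (hi : StrictAnti i)
    (hS : IsNBC M (Set.range i))
    (F : ℕ → Set α) (hF : ∀ k : ℕ, F k = M.closure (i '' {j : Fin p | (j : ℕ) < k}))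
    (i' : Fin p → α) (hi' : Function.Injective i')
    (hS' : IsNBC M (Set.range i'))
    (A : Matrix (Fin p) (Fin p) ℤ)
    (hA : ∀ j k : Fin p,
      A j k = if i' j ∈ F ((k : ℕ) + 1) \ F (k : ℕ) then 1 else 0) :
    ((∀ j : Fin p, i' j = i j) → A = 1 ∧ A.det = 1) ∧
      (Set.range i' ≠ Set.range i → A.det = 0) := by
  have hSE : Set.range i ⊆ M.E := hS.1
  have hIndS : M.Indep (Set.range i) := hS.indep
  have Fmono : ∀ {a b : ℕ}, a ≤ b → F a ⊆ F b := by
    intro a b hab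
    rw [hF, hF]
    exact M.closure_subset_closure (Set.image_mono fun j hj => lt_of_lt_of_le hj hab)
  -- i k ∈ F (k+1) \ F k
  have key0 : ∀ k : Fin p, i k ∈ F ((k : ℕ) + 1) \ F (k : ℕ) := by
    intro k
    constructor
    · rw [hF]
      exact M.subset_closure _ ((Set.image_subset_range _ _).trans hSE)
        ⟨k, Nat.lt_succ_self _, rfl⟩
    · rw [hF]
      intro hmem
      have hsub : i '' {j : Fin p | (j : ℕ) < (k : ℕ)} ⊆ Set.range i \ {i k} := by
        rintro x ⟨j, hj, rfl⟩
        refine ⟨Set.mem_range_self j, ?_⟩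
        simp only [Set.mem_singleton_iff]
        intro hij
        exact absurd (hi.injective hij) (by intro h; subst h; simp at hj)
      exact hIndS.notMem_closure_diff_of_mem (Set.mem_range_self k)
        (M.closure_subset_closure hsub hmem)
  constructor
  · -- part (a)
    intro h
    have hA1 : A = 1 := by
      ext j k
      rw [hA, Matrix.one_apply, h j]
      rcases lt_trichotomy j k with hjk | hjk | hjk
      · have h1 : i j ∉ F ((k : ℕ) + 1) \ F (k : ℕ) :=
          fun hd => hd.2 (Fmono (Nat.succ_le_of_lt hjk) (key0 j).1)
        rw [if_neg h1, if_neg (show ¬ j = k from hjk.ne)]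
      · subst hjk
        rw [if_pos (key0 j), if_pos rfl]
      · have h1 : i j ∉ F ((k : ℕ) + 1) \ F (k : ℕ) :=
          fun hd => (key0 j).2 (Fmono (Nat.succ_le_of_lt hjk) hd.1)
        rw [if_neg h1, if_neg (show ¬ j = k from hjk.ne')]
    exact ⟨hA1, by rw [hA1, Matrix.det_one]⟩
  · -- part (b)
    intro hne
    by_contra hdet
    -- each row has at most one 1
    have uniq : ∀ (j : Fin p) {k k' : Fin p},
        i' j ∈ F ((k : ℕ) + 1) \ F (k : ℕ) → i' j ∈ F ((k' : ℕ) + 1) \ F (k' : ℕ) → k = k' := by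
      intro j k k' h1 h2
      by_contra hkk
      rcases lt_or_gt_of_ne hkk with hlt | hlt
      · exact h2.2 (Fmono (Nat.succ_le_of_lt hlt) h1.1)
      · exact h1.2 (Fmono (Nat.succ_le_of_lt hlt) h2.1)
    -- every row is nonzero
    have rownz : ∀ j : Fin p, ∃ k : Fin p, i' j ∈ F ((k : ℕ) + 1) \ F (k : ℕ) := by
      intro j
      by_contra hrow
      push_neg at hrow
      exact hdet (Matrix.det_eq_zero_of_row_eq_zero j fun k => by
        rw [hA, if_neg (hrow k)])
    set φ : Fin p → Fin p := fun j => Classical.choose (rownz j) with hφdef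
    have hφ : ∀ j, i' j ∈ F ((φ j : ℕ) + 1) \ F ((φ j : ℕ)) := fun j =>
      Classical.choose_spec (rownz j)
    have hrow : ∀ j k, A j k = if k = φ j then 1 else 0 := by
      intro j k
      rw [hA]
      rcases eq_or_ne k (φ j) with rfl | hk
      · rw [if_pos (hφ j), if_pos rfl]
      · rw [if_neg (fun hm => hk (uniq j hm (hφ j))), if_neg hk]
    have hφinj : Function.Injective φ := by
      intro j1 j2 heq
      by_contra hne12
      exact hdet (Matrix.det_zero_of_row_eq hne12 (funext fun k => by
        rw [hrow, hrow, heq]))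
    have hφsurj : Function.Surjective φ := Finite.surjective_of_injective hφinj
    -- main induction
    have key : ∀ n : ℕ, ∀ k : Fin p, (k : ℕ) = n → ∀ j, φ j = k → i' j = i k := by
      intro n
      induction n using Nat.strong_induction_on with
      | _ n IH =>
        intro k hk j hjk
        by_contra hne'
        set X := i '' {m : Fin p | (m : ℕ) < (k : ℕ)} with hX
        have hXrange : X ⊆ Set.range i := Set.image_subset_range _ _
        have hXindep : M.Indep (insert (i k) X) :=
          hIndS.subset (Set.insert_subset (Set.mem_range_self k) hXrange)
        have hsetins : {m : Fin p | (m : ℕ) < (k : ℕ) + 1}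
            = insert k {m : Fin p | (m : ℕ) < (k : ℕ)} := by
          ext m
          simp only [Set.mem_setOf_eq, Set.mem_insert_iff, Fin.ext_iff]; omega
        have hmem1 : i' j ∈ M.closure (insert (i k) X) := by
          have := (hφ j).1
          rw [hjk, hF, hsetins, Set.image_insert_eq] at this
          exact this
        have hmem2 : i' j ∉ M.closure X := by
          have := (hφ j).2
          rw [hjk, hF] at this
          exact this
        have hnotinX : i' j ∉ insert (i k) X := by
          rintro (h1 | h1)
          · exact hne' h1
          · exact hmem2 (M.subset_closure X (hXrange.trans hSE) h1)
        have hdep : M.Dep (insert (i' j) (insert (i k) X)) :=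
          hXindep.insert_dep_iff.mpr ⟨hmem1, hnotinX⟩
        obtain ⟨C, hCsub, hC⟩ := exists_circuit_of_dep hdep
        have hi'jC : i' j ∈ C := by
          by_contra h
          exact hC.1.not_indep (hXindep.subset
            ((Set.subset_insert_iff_of_notMem h).mp hCsub))
        have hikC : i k ∈ C := by
          by_contra h
          have hsub : C \ {i' j} ⊆ X := by
            rintro x ⟨hxC, hxne⟩
            rcases hCsub hxC with rfl | rfl | hx
            · exact absurd rfl hxne
            · exact absurd hxC h
            · exact hx
          exact hmem2 (M.closure_subset_closure hsub (hC.mem_closure_diff hi'jC))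
        obtain ⟨m, hmC, hmin⟩ := Set.exists_min_image C id (Set.toFinite C) ⟨_, hi'jC⟩
        rcases eq_or_ne m (i' j) with rfl | hmne
        · -- broken circuit inside range i
          refine hS.2 (C \ {i' j}) ⟨C, i' j, hC, hmC, hmin, rfl⟩ ?_
          rintro x ⟨hxC, hxne⟩
          rcases hCsub hxC with rfl | rfl | hx
          · exact absurd rfl hxne
          · exact Set.mem_range_self k
          · exact hXrange hx
        · have hmk : m = i k := by
            rcases hCsub hmC with rfl | rfl | hmX
            · exact absurd rfl hmne
            · rfl
            · obtain ⟨m', hm'lt, rfl⟩ := hmX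
              exact absurd (hmin (i k) hikC) (not_le.mpr (hi (show m' < k from hm'lt)))
          refine hS'.2 (C \ {m}) ⟨C, m, hC, hmC, hmin, rfl⟩ ?_
          rintro x ⟨hxC, hxne⟩
          rcases hCsub hxC with rfl | rfl | hx
          · exact Set.mem_range_self j
          · exact absurd hmk.symm hxne
          · obtain ⟨m', hm'lt, rfl⟩ := hx
            obtain ⟨j', hj'⟩ := hφsurj m'
            exact ⟨j', IH (m' : ℕ) (hk ▸ hm'lt) m' rfl j' hj'⟩
    apply hne
    apply Set.eq_of_subset_of_subset
    · rintro _ ⟨j, rfl⟩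
      rw [key (φ j : ℕ) (φ j) rfl j rfl]
      exact Set.mem_range_self _
    · rintro _ ⟨k, rfl⟩
      obtain ⟨j, hj⟩ := hφsurj k
      exact ⟨j, key (k : ℕ) k rfl j hj⟩
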